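/- Let X be a topological space and f : X × [0,1] → ℝ such that: (1) for every x ∈ X, α ↦ f(x,α) is continuous and strictly concave on [0,1], attaining its maximum at a unique point τ(x); (2) there is a dense set D ⊆ [0,1] such that for every α ∈ D, x ↦ f(x,α) is continuous. Then the function τ : X → [0,1] is continuous. -/

import Mathlib

lemma aux_lt_max {g : ℝ → ℝ} (hg : ConcaveOn ℝ (Set.Icc 0 1) g) {t a b : ℝ}
    (hτ : t ∈ Set.Icc (0:ℝ) 1) (hmax : ∀ α ∈ Set.Icc (0:ℝ) 1, g α ≤ g t)
    (ha : a ∈ Set.Icc (0:ℝ) 1) (hb : b ∈ Set.Icc (0:ℝ) 1)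
    (hab : a < b) (h : g a < g b) : a < t := by
  by_contra hc
  push_neg at hc
  rcases eq_or_lt_of_le hc with heq | hlt
  · have := hmax b hb; rw [heq] at this; linarith
  · set s := (b - a)/(b - t) with hs
    have hbt : 0 < b - t := by linarith
    have hs0 : 0 < s := div_pos (by linarith) hbt
    have hs1 : s < 1 := (div_lt_one hbt).2 (by linarith)
    have hcomb : s • t + (1 - s) • b = a := by
      field_simp [hs, smul_eq_mul]
      have key : s * (b - t) = b - a := by rw [hs]; exact div_mul_cancel₀ _ hbt.ne'
      linear_combination -key
    have hcc := hg.2 hτ hb hs0.le (by linarith : (0:ℝ) ≤ 1 - s) (by ring)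
    rw [hcomb] at hcc
    have hgb := hmax b hb
    simp only [smul_eq_mul] at hcc
    nlinarith

lemma aux_max_lt {g : ℝ → ℝ} (hg : ConcaveOn ℝ (Set.Icc 0 1) g) {t a b : ℝ}
    (hτ : t ∈ Set.Icc (0:ℝ) 1) (hmax : ∀ α ∈ Set.Icc (0:ℝ) 1, g α ≤ g t)
    (ha : a ∈ Set.Icc (0:ℝ) 1) (hb : b ∈ Set.Icc (0:ℝ) 1)
    (hab : a < b) (h : g b < g a) : t < b := by
  by_contra hc
  push_neg at hc
  rcases eq_or_lt_of_le hc with heq | hlt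
  · have := hmax a ha; rw [← heq] at this; linarith
  · set s := (t - b)/(t - a) with hs
    have hta : 0 < t - a := by linarith
    have hs0 : 0 < s := div_pos (by linarith) hta
    have hs1 : s < 1 := (div_lt_one hta).2 (by linarith)
    have hcomb : s • a + (1 - s) • t = b := by
      field_simp [hs, smul_eq_mul]
      have key : s * (t - a) = t - b := by rw [hs]; exact div_mul_cancel₀ _ hta.ne'
      linear_combination -key
    have hcc := hg.2 ha hτ hs0.le (by linarith : (0:ℝ) ≤ 1 - s) (by ring)
    rw [hcomb] at hcc
    have hga := hmax a ha
    simp only [smul_eq_mul] at hcc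
    nlinarith

/-- Continuity of the maximizer of a family of strictly concave functions. -/
theorem maximizer_continuous {X : Type*} [TopologicalSpace X]
    (f : X → ℝ → ℝ) (τ : X → ℝ)
    (hcont : ∀ x : X, ContinuousOn (f x) (Set.Icc 0 1))
    (hconc : ∀ x : X, StrictConcaveOn ℝ (Set.Icc 0 1) (f x))
    (hτmem : ∀ x : X, τ x ∈ Set.Icc (0 : ℝ) 1)
    (hτmax : ∀ x : X, ∀ α ∈ Set.Icc (0 : ℝ) 1, f x α ≤ f x (τ x))
    (hτuniq : ∀ x : X, ∀ α ∈ Set.Icc (0 : ℝ) 1, f x α = f x (τ x) → α = τ x)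
    (D : Set ℝ) (hD : D ⊆ Set.Icc 0 1) (hDdense : Set.Icc (0 : ℝ) 1 ⊆ closure D)
    (hfc : ∀ α ∈ D, Continuous fun x : X => f x α) :
    Continuous τ := by
  rw [continuous_iff_continuousAt]
  intro x₀
  rw [ContinuousAt, Metric.tendsto_nhds]
  intro ε hε
  -- Left bound: eventually τ x₀ - ε < τ x
  have left : ∀ᶠ x in nhds x₀, τ x₀ - ε < τ x := by
    by_cases hneg : τ x₀ - ε < 0
    · filter_upwards with x
      have := (hτmem x).1
      linarith
    · push_neg at hneg
      -- find a ∈ D ∩ Ioo (τ x₀ - ε) (τ x₀)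
      have hτx₀ := hτmem x₀
      have hmid : τ x₀ - ε/2 ∈ closure D := by
        apply hDdense
        constructor <;> [linarith; linarith [hτx₀.2]]
      obtain ⟨a, haI, haD⟩ := (_root_.mem_closure_iff.1 hmid) (Set.Ioo (τ x₀ - ε) (τ x₀))
        isOpen_Ioo ⟨by linarith, by linarith⟩
      have haIcc := hD haD
      -- f x₀ a < f x₀ (τ x₀)
      have hane : a ≠ τ x₀ := ne_of_lt haI.2
      have hstrict : f x₀ a < f x₀ (τ x₀) :=
        lt_of_le_of_ne (hτmax x₀ a haIcc) (fun h => hane (hτuniq x₀ a haIcc h))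
      set gap := f x₀ (τ x₀) - f x₀ a with hgap
      have hgap0 : 0 < gap := by linarith
      -- continuity of f x₀ at τ x₀ within Icc
      have hcw : ContinuousWithinAt (f x₀) (Set.Icc 0 1) (τ x₀) := hcont x₀ (τ x₀) hτx₀
      rw [Metric.continuousWithinAt_iff] at hcw
      obtain ⟨δ, hδ0, hδ⟩ := hcw gap hgap0
      have hr0 : 0 < min δ (τ x₀ - a) := lt_min hδ0 (by linarith [haI.2])
      -- find b ∈ D close to τ x₀
      obtain ⟨b, hbI, hbD⟩ := (_root_.mem_closure_iff.1 (hDdense hτx₀))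
        (Metric.ball (τ x₀) (min δ (τ x₀ - a))) Metric.isOpen_ball
        (Metric.mem_ball_self hr0)
      have hbIcc := hD hbD
      have hbdist : |b - τ x₀| < δ ∧ |b - τ x₀| < τ x₀ - a := by
        simpa [Real.dist_eq, lt_min_iff] using hbI
      have hab : a < b := by
        have := abs_lt.1 hbdist.2
        linarith [this.1]
      have hfb : f x₀ a < f x₀ b := by
        have := hδ hbIcc (by rw [Real.dist_eq]; exact hbdist.1)
        have := abs_lt.1 (by simpa [Real.dist_eq] using this)
        linarith [this.1]
      -- open set where f x a < f x b
      have hopen : IsOpen {x : X | f x a < f x b} :=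
        isOpen_lt (hfc a haD) (hfc b hbD)
      have hmem : x₀ ∈ {x : X | f x a < f x b} := hfb
      filter_upwards [hopen.mem_nhds hmem] with x hx
      have := aux_lt_max (hconc x).concaveOn (hτmem x) (hτmax x) haIcc hbIcc hab hx
      linarith [haI.1]
  have right : ∀ᶠ x in nhds x₀, τ x < τ x₀ + ε := by
    by_cases hbig : 1 < τ x₀ + ε
    · filter_upwards with x
      have := (hτmem x).2
      linarith
    · push_neg at hbig
      have hτx₀ := hτmem x₀
      have hmid : τ x₀ + ε/2 ∈ closure D := by
        apply hDdense
        constructor <;> [linarith [hτx₀.1]; linarith]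
      obtain ⟨b, hbI, hbD⟩ := (_root_.mem_closure_iff.1 hmid) (Set.Ioo (τ x₀) (τ x₀ + ε))
        isOpen_Ioo ⟨by linarith, by linarith⟩
      have hbIcc := hD hbD
      have hbne : b ≠ τ x₀ := ne_of_gt hbI.1
      have hstrict : f x₀ b < f x₀ (τ x₀) :=
        lt_of_le_of_ne (hτmax x₀ b hbIcc) (fun h => hbne (hτuniq x₀ b hbIcc h))
      set gap := f x₀ (τ x₀) - f x₀ b with hgap
      have hgap0 : 0 < gap := by linarith
      have hcw : ContinuousWithinAt (f x₀) (Set.Icc 0 1) (τ x₀) := hcont x₀ (τ x₀) hτx₀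
      rw [Metric.continuousWithinAt_iff] at hcw
      obtain ⟨δ, hδ0, hδ⟩ := hcw gap hgap0
      have hr0 : 0 < min δ (b - τ x₀) := lt_min hδ0 (by linarith [hbI.1])
      obtain ⟨a, haI, haD⟩ := (_root_.mem_closure_iff.1 (hDdense hτx₀))
        (Metric.ball (τ x₀) (min δ (b - τ x₀))) Metric.isOpen_ball
        (Metric.mem_ball_self hr0)
      have haIcc := hD haD
      have hadist : |a - τ x₀| < δ ∧ |a - τ x₀| < b - τ x₀ := by
        simpa [Real.dist_eq, lt_min_iff] using haI
      have hab : a < b := by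
        have := abs_lt.1 hadist.2
        linarith [this.2]
      have hfa : f x₀ b < f x₀ a := by
        have := hδ haIcc (by rw [Real.dist_eq]; exact hadist.1)
        have := abs_lt.1 (by simpa [Real.dist_eq] using this)
        linarith [this.1]
      have hopen : IsOpen {x : X | f x b < f x a} :=
        isOpen_lt (hfc b hbD) (hfc a haD)
      have hmem : x₀ ∈ {x : X | f x b < f x a} := hfa
      filter_upwards [hopen.mem_nhds hmem] with x hx
      have := aux_max_lt (hconc x).concaveOn (hτmem x) (hτmax x) haIcc hbIcc hab hx
      linarith [hbI.2]
  filter_upwards [left, right] with x h1 h2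
  rw [Real.dist_eq, abs_lt]
  constructor <;> linarith
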